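/- Let K be algebraically closed and I = (f_1, …, f_r) ⊴ K[x]. Suppose for each 1 ≤ i ≤ r that h_i ∈ K[x] and l_i ∈ ℕ satisfy det(v)^{l_i} · f_i(v⁻¹) = h_i(v) for all v ∈ GL(n, K). Then V*(I) is closed under inversion (v ∈ V*(I) implies v⁻¹ ∈ V*(I)) if and only if h_i ∈ √Î (the radical of Î in K[x̂]) for every 1 ≤ i ≤ r, where h_i is regarded as an element of K[x̂] via the inclusion K[x] ⊆ K[x̂]. -/

import Mathlib

open MvPolynomial

/-- Evaluation of a polynomial in the `n²` indeterminates at an `n × n` matrix. -/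
noncomputable def matEval {n : ℕ} {K : Type*} [Field K] (v : Matrix (Fin n) (Fin n) K) :
    MvPolynomial (Fin n × Fin n) K →+* K :=
  MvPolynomial.eval (fun p => v p.1 p.2)

/-- `V(I)`: the matrices annihilating every polynomial of `I`. -/
def Vset {n : ℕ} {K : Type*} [Field K] (I : Ideal (MvPolynomial (Fin n × Fin n) K)) :
    Set (Matrix (Fin n) (Fin n) K) :=
  {v | ∀ f ∈ I, matEval v f = 0}

/-- `V*(I) = V(I) ∩ GL(n,K)`: the invertible matrices in `V(I)`. -/
def Vstar {n : ℕ} {K : Type*} [Field K] (I : Ideal (MvPolynomial (Fin n × Fin n) K)) :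
    Set (Matrix (Fin n) (Fin n) K) :=
  {v | v ∈ Vset I ∧ IsUnit v}

/-- `det(x)`, the determinant of the matrix of indeterminates. -/
noncomputable def detPoly (n : ℕ) (K : Type*) [Field K] : MvPolynomial (Fin n × Fin n) K :=
  (Matrix.of fun i j => MvPolynomial.X (i, j)).det

/-- `f₀ = x₀ · det(x) − 1 ∈ K[x̂]`, where `x₀` is the extra indeterminate `none`. -/
noncomputable def fzero (n : ℕ) (K : Type*) [Field K] :
    MvPolynomial (Option (Fin n × Fin n)) K :=
  MvPolynomial.X none * MvPolynomial.rename some (detPoly n K) - 1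

/-- `Î = I·K[x̂] + (f₀)`. -/
noncomputable def Ihat {n : ℕ} {K : Type*} [Field K]
    (I : Ideal (MvPolynomial (Fin n × Fin n) K)) :
    Ideal (MvPolynomial (Option (Fin n × Fin n)) K) :=
  Ideal.map (MvPolynomial.rename (some : Fin n × Fin n → Option (Fin n × Fin n))) I
    ⊔ Ideal.span {fzero n K}

/-- Evaluation of a polynomial in `K[x̂]` at a pair `(v₀, v) ∈ K ⊕ K^{n×n}`. -/
noncomputable def hatEval {n : ℕ} {K : Type*} [Field K] (v₀ : K)
    (v : Matrix (Fin n) (Fin n) K) :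
    MvPolynomial (Option (Fin n × Fin n)) K →+* K :=
  MvPolynomial.eval (fun o : Option (Fin n × Fin n) => o.elim v₀ (fun p => v p.1 p.2))

/-- `V(Ĵ) ⊆ K ⊕ K^{n×n}` for an ideal `Ĵ ⊴ K[x̂]`. -/
def VhatSet {n : ℕ} {K : Type*} [Field K]
    (J : Ideal (MvPolynomial (Option (Fin n × Fin n)) K)) :
    Set (K × Matrix (Fin n) (Fin n) K) :=
  {p | ∀ f ∈ J, hatEval p.1 p.2 f = 0}

lemma matEval_detPoly {n : ℕ} {K : Type*} [Field K] (v : Matrix (Fin n) (Fin n) K) :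
    matEval v (detPoly n K) = v.det := by
  unfold matEval detPoly
  rw [RingHom.map_det]
  congr 1
  ext i j
  simp [MvPolynomial.eval_X]

lemma mem_Vset_iff {n : ℕ} {K : Type*} [Field K] {r : ℕ}
    (f : Fin r → MvPolynomial (Fin n × Fin n) K) (v : Matrix (Fin n) (Fin n) K) :
    v ∈ Vset (Ideal.span (Set.range f)) ↔ ∀ i, matEval v (f i) = 0 := by
  constructor
  · exact fun H i => H _ (Ideal.subset_span ⟨i, rfl⟩)
  · intro H g hg
    have : Ideal.span (Set.range f) ≤ RingHom.ker (matEval v) := by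
      rw [Ideal.span_le]
      rintro _ ⟨i, rfl⟩
      exact H i
    exact this hg

/-- The matrix corresponding to the restriction of a point `x : Option (Fin n × Fin n) → K`. -/
def ptMat {n : ℕ} {K : Type*} [Field K] (x : Option (Fin n × Fin n) → K) :
    Matrix (Fin n) (Fin n) K :=
  Matrix.of fun i j => x (some (i, j))

lemma matEval_rename {n : ℕ} {K : Type*} [Field K] (x : Option (Fin n × Fin n) → K)
    (g : MvPolynomial (Fin n × Fin n) K) :
    MvPolynomial.eval x (MvPolynomial.rename some g) = matEval (ptMat x) g := by
  rw [MvPolynomial.eval_rename]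
  rfl

lemma aeval_self_eq {σ : Type*} {K : Type*} [Field K] (x : σ → K) (p : MvPolynomial σ K) :
    MvPolynomial.aeval x p = MvPolynomial.eval x p := rfl

lemma mem_zeroLocus_Ihat {n : ℕ} {K : Type*} [Field K]
    (I : Ideal (MvPolynomial (Fin n × Fin n) K)) (x : Option (Fin n × Fin n) → K) :
    x ∈ MvPolynomial.zeroLocus K (Ihat I) ↔
      ptMat x ∈ Vset I ∧ x none * (ptMat x).det = 1 := by
  have : x ∈ MvPolynomial.zeroLocus K (Ihat I) ↔
      Ihat I ≤ RingHom.ker (MvPolynomial.eval x) := by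
    constructor
    · intro H p hp; rw [RingHom.mem_ker, ← aeval_self_eq]; exact H p hp
    · intro H p hp; rw [aeval_self_eq]; exact H hp
  rw [this]
  unfold Ihat
  rw [sup_le_iff, Ideal.map_le_iff_le_comap, Ideal.span_le, Set.singleton_subset_iff]
  have h2 : (fzero n K ∈ RingHom.ker (MvPolynomial.eval x)) ↔
      x none * (ptMat x).det = 1 := by
    rw [RingHom.mem_ker]
    unfold fzero
    rw [map_sub, map_mul, map_one, MvPolynomial.eval_X, matEval_rename,
      matEval_detPoly, sub_eq_zero]
  rw [SetLike.mem_coe, h2]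
  constructor
  · rintro ⟨H1, H2⟩
    refine ⟨fun g hg => ?_, H2⟩
    have := H1 hg
    rw [Ideal.mem_comap, RingHom.mem_ker, matEval_rename] at this
    exact this
  · rintro ⟨H1, H2⟩
    refine ⟨fun g hg => ?_, H2⟩
    rw [Ideal.mem_comap, RingHom.mem_ker, matEval_rename]
    exact H1 g hg

/-- `V*(I)` is closed under inversion iff `hᵢ ∈ √Î` for every `i`
(with `hᵢ` regarded in `K[x̂]` via `K[x] ⊆ K[x̂]`), where
`det(v)^{lᵢ} · fᵢ(v⁻¹) = hᵢ(v)` for all invertible `v`. -/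
theorem stmt9 {n : ℕ} (hn : 1 ≤ n) {K : Type*} [Field K] [IsAlgClosed K]
    (r : ℕ) (f h : Fin r → MvPolynomial (Fin n × Fin n) K) (l : Fin r → ℕ)
    (I : Ideal (MvPolynomial (Fin n × Fin n) K)) (hI : I = Ideal.span (Set.range f))
    (hfh : ∀ i : Fin r, ∀ v : Matrix (Fin n) (Fin n) K, IsUnit v →
      v.det ^ l i * matEval v⁻¹ (f i) = matEval v (h i)) :
    (∀ v ∈ Vstar I, v⁻¹ ∈ Vstar I) ↔
      (∀ i : Fin r,
        MvPolynomial.rename (some : Fin n × Fin n → Option (Fin n × Fin n)) (h i) ∈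
          (Ihat I).radical) := by
  subst hI
  constructor
  · intro H i
    rw [← MvPolynomial.vanishingIdeal_zeroLocus_eq_radical (K := K),
      MvPolynomial.mem_vanishingIdeal_iff]
    intro x hx
    rw [mem_zeroLocus_Ihat] at hx
    obtain ⟨hv, hdet⟩ := hx
    set v := ptMat x with hvdef
    have hdet0 : v.det ≠ 0 := by
      intro h0
      rw [h0, mul_zero] at hdet
      exact one_ne_zero hdet.symm
    have hu : IsUnit v := (Matrix.isUnit_iff_isUnit_det v).2 (isUnit_iff_ne_zero.2 hdet0)
    have hv' := H v ⟨hv, hu⟩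
    rw [aeval_self_eq, matEval_rename, ← hfh i v hu]
    have hz : matEval v⁻¹ (f i) = 0 := ((mem_Vset_iff f v⁻¹).1 hv'.1) i
    rw [hz, mul_zero]
  · intro H v hv
    obtain ⟨hvV, hu⟩ := hv
    have hdet0 : v.det ≠ 0 :=
      isUnit_iff_ne_zero.1 ((Matrix.isUnit_iff_isUnit_det v).1 hu)
    refine ⟨?_, ?_⟩
    · rw [mem_Vset_iff]
      intro i
      set x : Option (Fin n × Fin n) → K :=
        fun o => o.elim (v.det)⁻¹ (fun p => v p.1 p.2) with hxdef
      have hpt : ptMat x = v := by ext i j; rfl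
      have hx : x ∈ MvPolynomial.zeroLocus K (Ihat (Ideal.span (Set.range f))) := by
        rw [mem_zeroLocus_Ihat, hpt]
        exact ⟨hvV, inv_mul_cancel₀ hdet0⟩
      have h0 : matEval v (h i) = 0 := by
        have hr := H i
        rw [← MvPolynomial.vanishingIdeal_zeroLocus_eq_radical (K := K),
          MvPolynomial.mem_vanishingIdeal_iff] at hr
        have := hr x hx
        rwa [aeval_self_eq, matEval_rename, hpt] at this
      have heq := hfh i v hu
      rw [h0] at heq
      exact (mul_eq_zero.1 heq).resolve_left (pow_ne_zero _ hdet0)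
    · rw [Matrix.isUnit_iff_isUnit_det, Matrix.det_nonsing_inv, isUnit_iff_ne_zero]
      simpa using inv_ne_zero hdet0
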